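/- arXiv:0810.4221 — 2 statements merged into one kernel-verified Lean document; each statement's English description precedes it below -/
import Mathlib

section
/- Let $\rho \in (0,1]$. Then $\int_0^\infty e^{-t} \rho^{\tanh(t/2)}\, dt \le \int_0^1 2\rho^u\, du = \frac{2(1-\rho)}{-\log \rho}$ (interpreted as $2$ when $\rho = 1$). -/
open MeasureTheory Real Filter Set Topology

lemma tanh_lower (x : ℝ) (hx : 0 ≤ x) : 1 - Real.exp (-x) ≤ Real.tanh x := by
  rw [Real.tanh_eq_sinh_div_cosh, Real.sinh_eq, Real.cosh_eq, le_div_iff₀ (by positivity)]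
  have h1 : Real.exp (-x) * Real.exp x = 1 := by rw [← Real.exp_add]; simp
  nlinarith [sq_nonneg (1 - Real.exp (-x)), Real.exp_pos x, Real.exp_pos (-x),
    Real.one_le_exp hx]

lemma tanh_nonneg' (x : ℝ) (hx : 0 ≤ x) : 0 ≤ Real.tanh x := by
  rw [Real.tanh_eq_sinh_div_cosh]
  refine div_nonneg ?_ (Real.cosh_pos x).le
  calc (0:ℝ) = Real.sinh 0 := Real.sinh_zero.symm
    _ ≤ Real.sinh x := by rw [Real.sinh_le_sinh]; exact hx

theorem exp_tanh_integral_bound (ρ : ℝ) (hρ0 : 0 < ρ) (hρ1 : ρ ≤ 1) :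
    (∫ t in Set.Ioi (0 : ℝ), Real.exp (-t) * ρ ^ Real.tanh (t / 2))
      ≤ (∫ u in Set.Ioo (0 : ℝ) 1, 2 * ρ ^ u) ∧
    (∫ u in Set.Ioo (0 : ℝ) 1, 2 * ρ ^ u)
      = if ρ = 1 then 2 else 2 * (1 - ρ) / (-Real.log ρ) := by
  have hrpow : ∀ x : ℝ, ρ ^ x = Real.exp (Real.log ρ * x) := fun x => by
    rw [Real.rpow_def_of_pos hρ0]
  by_cases h1 : ρ = 1
  · subst h1
    simp only [Real.one_rpow, mul_one, if_true]
    constructor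
    · rw [integral_exp_neg_Ioi_zero]
      rw [setIntegral_const]
      simp [Real.volume_Ioo]
    · rw [setIntegral_const]
      simp [Real.volume_Ioo]
  · have hlt : ρ < 1 := lt_of_le_of_ne hρ1 h1
    have hlog : Real.log ρ < 0 := Real.log_neg hρ0 hlt
    set c : ℝ := -Real.log ρ with hc
    have hcpos : 0 < c := by simp [hc]; linarith
    have hlogne : Real.log ρ ≠ 0 := hlog.ne
    -- RHS value
    have hRHS : (∫ u in Set.Ioo (0 : ℝ) 1, 2 * ρ ^ u) = 2 * (1 - ρ) / c := by
      rw [← integral_Ioc_eq_integral_Ioo, ← intervalIntegral.integral_of_le (by norm_num : (0:ℝ) ≤ 1)]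
      have : ∀ u ∈ Set.uIcc (0:ℝ) 1, HasDerivAt (fun x => 2 * ρ ^ x / Real.log ρ)
          (2 * ρ ^ u) u := by
        intro u _
        have h := ((Real.hasStrictDerivAt_const_rpow hρ0 u).hasDerivAt.const_mul 2).div_const
          (Real.log ρ)
        refine h.congr_deriv ?_
        field_simp
      rw [intervalIntegral.integral_eq_sub_of_hasDerivAt this (by
        apply Continuous.intervalIntegrable
        have hco : Continuous fun u : ℝ => ρ ^ u := by
          have he : (fun u : ℝ => ρ ^ u) = fun u => Real.exp (Real.log ρ * u) := funext hrpow
          rw [he]; fun_prop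
        exact continuous_const.mul hco)]
      rw [Real.rpow_one, Real.rpow_zero]
      rw [hc]
      field_simp
      ring
    refine ⟨?_, by rw [hRHS]; simp [h1]⟩
    -- integrands
    set f : ℝ → ℝ := fun t => Real.exp (-t) * ρ ^ Real.tanh (t / 2) with hf
    set g : ℝ → ℝ := fun t => Real.exp (-t) * ρ ^ (1 - Real.exp (-(t / 2))) with hg
    have hcontrpow : Continuous fun x : ℝ => ρ ^ x := by
      have he : (fun x : ℝ => ρ ^ x) = fun x => Real.exp (Real.log ρ * x) := funext hrpow
      rw [he]; fun_prop
    have hconttanh : Continuous Real.tanh := by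
      have he : Real.tanh = fun x => Real.sinh x / Real.cosh x :=
        funext fun x => Real.tanh_eq_sinh_div_cosh x
      rw [he]
      exact Real.continuous_sinh.div Real.continuous_cosh fun x => (Real.cosh_pos x).ne'
    have hcontf : Continuous f := by
      rw [hf]
      exact (Real.continuous_exp.comp continuous_neg).mul
        (hcontrpow.comp (hconttanh.comp (continuous_id.div_const 2)))
    have hcontg : Continuous g := by
      rw [hg]
      exact (Real.continuous_exp.comp continuous_neg).mul
        (hcontrpow.comp (continuous_const.sub
          (Real.continuous_exp.comp (continuous_neg.comp (continuous_id.div_const 2)))))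
    have hexpint : IntegrableOn (fun t => Real.exp (-t)) (Set.Ioi (0:ℝ)) := by
      simpa using exp_neg_integrableOn_Ioi (0:ℝ) one_pos
    have hbound : ∀ h : ℝ → ℝ, Continuous h →
        (∀ t ∈ Set.Ioi (0:ℝ), 0 ≤ h t ∧ h t ≤ Real.exp (-t)) →
        IntegrableOn h (Set.Ioi (0:ℝ)) := by
      intro h hcont hle
      refine hexpint.mono' hcont.aestronglyMeasurable ?_
      filter_upwards [ae_restrict_mem measurableSet_Ioi] with t ht
      rw [Real.norm_eq_abs, abs_of_nonneg (hle t ht).1]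
      exact (hle t ht).2
    have hfle : ∀ t ∈ Set.Ioi (0:ℝ), 0 ≤ f t ∧ f t ≤ Real.exp (-t) := by
      intro t ht
      have h2 : ρ ^ Real.tanh (t / 2) ≤ 1 :=
        Real.rpow_le_one hρ0.le hρ1 (tanh_nonneg' _ (by simp at ht; linarith))
      constructor
      · exact mul_nonneg (Real.exp_pos _).le (Real.rpow_nonneg hρ0.le _)
      · calc f t ≤ Real.exp (-t) * 1 := by
              exact mul_le_mul_of_nonneg_left h2 (Real.exp_pos _).le
          _ = Real.exp (-t) := mul_one _
    have hgle : ∀ t ∈ Set.Ioi (0:ℝ), 0 ≤ g t ∧ g t ≤ Real.exp (-t) := by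
      intro t ht
      have hexp1 : Real.exp (-(t/2)) ≤ 1 := Real.exp_le_one_iff.mpr (by simp at ht ⊢; linarith)
      have h2 : ρ ^ (1 - Real.exp (-(t/2))) ≤ 1 :=
        Real.rpow_le_one hρ0.le hρ1 (by linarith)
      constructor
      · exact mul_nonneg (Real.exp_pos _).le (Real.rpow_nonneg hρ0.le _)
      · calc g t ≤ Real.exp (-t) * 1 := mul_le_mul_of_nonneg_left h2 (Real.exp_pos _).le
          _ = Real.exp (-t) := mul_one _
    have hfint : IntegrableOn f (Set.Ioi (0:ℝ)) := hbound f hcontf hfle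
    have hgint : IntegrableOn g (Set.Ioi (0:ℝ)) := hbound g hcontg hgle
    -- f ≤ g pointwise
    have hfg : ∀ t ∈ Set.Ioi (0:ℝ), f t ≤ g t := by
      intro t ht
      simp only [Set.mem_Ioi] at ht
      have := tanh_lower (t/2) (by linarith)
      have h2 : ρ ^ Real.tanh (t / 2) ≤ ρ ^ (1 - Real.exp (-(t/2))) :=
        Real.rpow_le_rpow_of_exponent_ge hρ0 hρ1 this
      exact mul_le_mul_of_nonneg_left h2 (Real.exp_pos _).le
    have hstep1 : (∫ t in Set.Ioi (0:ℝ), f t) ≤ ∫ t in Set.Ioi (0:ℝ), g t :=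
      setIntegral_mono_on hfint hgint measurableSet_Ioi hfg
    -- compute ∫ g via FTC
    set F : ℝ → ℝ := fun t =>
      2 / c ^ 2 * ((1 - c * Real.exp (-(t / 2))) * Real.exp (c * Real.exp (-(t / 2)) - c)) with hF
    have hderiv : ∀ t ∈ Set.Ici (0:ℝ), HasDerivAt F (g t) t := by
      intro t _
      have hs : HasDerivAt (fun t : ℝ => Real.exp (-(t / 2)))
          (Real.exp (-(t / 2)) * (-(1/2))) t := by
        have : HasDerivAt (fun t : ℝ => -(t / 2)) (-(1/2)) t :=
          ((hasDerivAt_id t).div_const 2).neg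
        exact this.exp
      have hA : HasDerivAt (fun t : ℝ => 1 - c * Real.exp (-(t / 2)))
          (-(c * (Real.exp (-(t / 2)) * (-(1/2))))) t := (hs.const_mul c).const_sub 1
      have hB : HasDerivAt (fun t : ℝ => Real.exp (c * Real.exp (-(t / 2)) - c))
          (Real.exp (c * Real.exp (-(t / 2)) - c) * (c * (Real.exp (-(t / 2)) * (-(1/2))))) t :=
        ((hs.const_mul c).sub_const c).exp
      have h := (hA.mul hB).const_mul (2 / c ^ 2)
      refine h.congr_deriv ?_
      have hexp2 : Real.exp (-(t/2)) * Real.exp (-(t/2)) = Real.exp (-t) := by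
        rw [← Real.exp_add]; ring_nf
      have hrw : ρ ^ (1 - Real.exp (-(t / 2))) = Real.exp (c * Real.exp (-(t / 2)) - c) := by
        rw [hrpow, hc]; ring_nf
      simp only [hg, hrw]
      rw [← hexp2]
      field_simp
      ring
    have hF0 : F 0 = 2 / c ^ 2 * (1 - c) := by
      simp [hF]
    have hFlim : Tendsto F atTop (𝓝 (2 / c ^ 2 * Real.exp (-c))) := by
      have hsT : Tendsto (fun t : ℝ => Real.exp (-(t / 2))) atTop (𝓝 0) := by
        apply Real.tendsto_exp_atBot.comp
        exact tendsto_neg_atTop_atBot.comp (tendsto_id.atTop_div_const two_pos)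
      have : Tendsto (fun t : ℝ => (1 - c * Real.exp (-(t / 2))) *
          Real.exp (c * Real.exp (-(t / 2)) - c)) atTop
          (𝓝 ((1 - c * 0) * Real.exp (c * 0 - c))) := by
        exact ((tendsto_const_nhds.sub (hsT.const_mul c)).mul
          (Real.continuous_exp.continuousAt.tendsto.comp ((hsT.const_mul c).sub_const c)))
      simpa using this.const_mul (2 / c ^ 2)
    have hIg : (∫ t in Set.Ioi (0:ℝ), g t)
        = 2 / c ^ 2 * Real.exp (-c) - F 0 := by
      refine integral_Ioi_of_hasDerivAt_of_tendsto ?_ (fun t ht => hderiv t (Set.Ioi_subset_Ici_self ht)) hgint hFlim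
      exact ((hderiv 0 (by simp)).continuousAt).continuousWithinAt
    -- final inequality
    have hE1 : Real.exp (-c) * (1 + c) ≤ 1 := by
      have h2 : Real.exp (-c) * Real.exp c = 1 := by rw [← Real.exp_add]; simp
      nlinarith [Real.add_one_le_exp c, Real.exp_pos (-c)]
    have hfinal : 2 / c ^ 2 * Real.exp (-c) - F 0 ≤ 2 * (1 - ρ) / c := by
      have hρval : ρ = Real.exp (-c) := by rw [hc, neg_neg, Real.exp_log hρ0]
      rw [hF0, hρval]
      have heq : 2 / c ^ 2 * Real.exp (-c) - 2 / c ^ 2 * (1 - c)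
          = 2 * (Real.exp (-c) - 1 + c) / c ^ 2 := by ring
      rw [heq, div_le_div_iff₀ (by positivity) hcpos]
      nlinarith [hE1, hcpos, mul_pos hcpos hcpos]
    rw [hRHS]
    calc (∫ t in Set.Ioi (0:ℝ), f t) ≤ ∫ t in Set.Ioi (0:ℝ), g t := hstep1
      _ = 2 / c ^ 2 * Real.exp (-c) - F 0 := hIg
      _ ≤ 2 * (1 - ρ) / c := hfinal
end

section
/- Suppose real random variables $M$ and $M'$ (with $M'$ an independent copy of $M$) satisfy: on an event $E$ with $\mathbb{P}(E^c) \le \gamma$, one has $|M - \overline{M}| \le \delta$ and $|M' - \overline{M}'| \le \delta$ where $\overline{M}, \overline{M}'$ are random variables with $\mathrm{Var}(\overline{M}) = \mathrm{Var}(\overline{M}') \le w$, $(\overline{M}, \overline{M}')$ are i.i.d., and $\mathbb{E}(M - M')^4 \le K$. Then $\mathrm{Var}(M) \le 3\delta^2 + 3w + \frac{1}{2}\sqrt{2\gamma K}$. -/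
open MeasureTheory ProbabilityTheory

lemma sq_diff_integral_eq_two_var {Ω : Type*} [MeasureSpace Ω]
    [IsProbabilityMeasure (ℙ : Measure Ω)]
    {X Y : Ω → ℝ} (hX : MemLp X 2 ℙ) (hY : MemLp Y 2 ℙ)
    (hind : IndepFun X Y ℙ) (hid : IdentDistrib X Y ℙ ℙ) :
    ∫ ω, (X ω - Y ω) ^ 2 = 2 * variance X ℙ := by
  have hXi := hX.integrable one_le_two
  have hYi := hY.integrable one_le_two
  have hXsq := hX.integrable_sq
  have hYsq := hY.integrable_sq
  have hXY : Integrable (fun ω => X ω * Y ω) ℙ := hind.integrable_mul hXi hYi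
  have expand : (fun ω => (X ω - Y ω) ^ 2)
      = fun ω => (X ω ^ 2 + Y ω ^ 2) - 2 * (X ω * Y ω) := by
    funext ω; ring
  have hmul : ∫ ω, X ω * Y ω = (∫ ω, X ω) * ∫ ω, Y ω :=
    hind.integral_fun_mul_eq_mul_integral hXi.1 hYi.1
  have hsqeq : ∫ ω, Y ω ^ 2 = ∫ ω, X ω ^ 2 :=
    ((hid.comp (measurable_id.pow_const 2)).integral_eq).symm
  have hinteq : ∫ ω, Y ω = ∫ ω, X ω := hid.integral_eq.symm
  have h2 : ∫ ω, (X ω ^ 2 + Y ω ^ 2) = (∫ ω, X ω ^ 2) + ∫ ω, Y ω ^ 2 :=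
    integral_add hXsq hYsq
  have hsum : Integrable (fun ω => X ω ^ 2 + Y ω ^ 2) ℙ := hXsq.add hYsq
  rw [expand, integral_sub hsum (hXY.const_mul 2), h2,
    integral_const_mul, hmul, hsqeq, hinteq, variance_eq_sub hX]
  simp only [Pi.pow_apply]
  ring

theorem strong_mp_variance_bound {Ω : Type*} [MeasureSpace Ω]
    [IsProbabilityMeasure (ℙ : Measure Ω)]
    (M M' Mb Mb' : Ω → ℝ) (E : Set Ω) (hE : MeasurableSet E)
    (δ γ w K : ℝ) (hδ : 0 ≤ δ) (hγ : 0 ≤ γ) (hK : 0 ≤ K)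
    (hMmem : MemLp M 2 ℙ) (hM'mem : MemLp M' 2 ℙ)
    (hMbmem : MemLp Mb 2 ℙ) (hMb'mem : MemLp Mb' 2 ℙ)
    (hindep : IndepFun M M' ℙ) (hident : IdentDistrib M M' ℙ ℙ)
    (hbindep : IndepFun Mb Mb' ℙ) (hbident : IdentDistrib Mb Mb' ℙ ℙ)
    (hvarb : variance Mb ℙ ≤ w) (hvarb' : variance Mb' ℙ ≤ w)
    (hclose : ∀ ω ∈ E, |M ω - Mb ω| ≤ δ ∧ |M' ω - Mb' ω| ≤ δ)
    (hEc : (ℙ Eᶜ).toReal ≤ γ)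
    (hfourth : Integrable (fun ω => (M ω - M' ω) ^ 4) ℙ)
    (hKbd : ∫ ω, (M ω - M' ω) ^ 4 ≤ K) :
    variance M ℙ ≤ 3 * δ ^ 2 + 3 * w + (1 / 2) * Real.sqrt (2 * γ * K) := by
  set f : Ω → ℝ := fun ω => (M ω - M' ω) ^ 2 with hf_def
  have hfmem : MemLp (fun ω => M ω - M' ω) 2 ℙ := by
    have := hMmem.sub hM'mem; exact this
  have hf_int : Integrable f ℙ := hfmem.integrable_sq
  have hg_int : Integrable (fun ω => 6 * δ ^ 2 + 3 * (Mb ω - Mb' ω) ^ 2) ℙ := by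
    have hb : MemLp (fun ω => Mb ω - Mb' ω) 2 ℙ := by
      have := hMbmem.sub hMb'mem; exact this
    exact (integrable_const _).add (hb.integrable_sq.const_mul 3)
  -- total integral equals 2 * variance M
  have htot : ∫ ω, f ω = 2 * variance M ℙ :=
    sq_diff_integral_eq_two_var hMmem hM'mem hindep hident
  have hsplit : ∫ ω, f ω = (∫ ω in E, f ω) + ∫ ω in Eᶜ, f ω :=
    (integral_add_compl hE hf_int).symm
  -- bound on E
  have hE_bound : (∫ ω in E, f ω) ≤ 6 * δ ^ 2 + 6 * w := by
    have h1 : (∫ ω in E, f ω) ≤ ∫ ω in E, (6 * δ ^ 2 + 3 * (Mb ω - Mb' ω) ^ 2) := by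
      refine setIntegral_mono_on hf_int.integrableOn hg_int.integrableOn hE ?_
      intro ω hω
      obtain ⟨h1, h2⟩ := hclose ω hω
      obtain ⟨h1a, h1b⟩ := abs_le.mp h1
      obtain ⟨h2a, h2b⟩ := abs_le.mp h2
      simp only [hf_def]
      nlinarith [sq_nonneg (M ω - Mb ω - (Mb ω - Mb' ω)),
        sq_nonneg (M ω - Mb ω + (M' ω - Mb' ω)),
        sq_nonneg (Mb ω - Mb' ω + (M' ω - Mb' ω)),
        mul_nonneg (by linarith : (0:ℝ) ≤ δ - (M ω - Mb ω)) (by linarith : (0:ℝ) ≤ M ω - Mb ω + δ),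
        mul_nonneg (by linarith : (0:ℝ) ≤ δ - (M' ω - Mb' ω)) (by linarith : (0:ℝ) ≤ M' ω - Mb' ω + δ)]
    have h2 : (∫ ω in E, (6 * δ ^ 2 + 3 * (Mb ω - Mb' ω) ^ 2))
        ≤ ∫ ω, (6 * δ ^ 2 + 3 * (Mb ω - Mb' ω) ^ 2) := by
      refine setIntegral_le_integral hg_int (ae_of_all _ fun ω => by positivity)
    have h3 : ∫ ω, (6 * δ ^ 2 + 3 * (Mb ω - Mb' ω) ^ 2)
        = 6 * δ ^ 2 + 3 * ∫ ω, (Mb ω - Mb' ω) ^ 2 := by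
      have hb : MemLp (fun ω => Mb ω - Mb' ω) 2 ℙ := by
        have := hMbmem.sub hMb'mem; exact this
      rw [integral_add (integrable_const _) (hb.integrable_sq.const_mul 3),
        integral_const, integral_const_mul]
      simp
    have h4 : ∫ ω, (Mb ω - Mb' ω) ^ 2 = 2 * variance Mb ℙ :=
      sq_diff_integral_eq_two_var hMbmem hMb'mem hbindep hbident
    calc (∫ ω in E, f ω) ≤ _ := h1
      _ ≤ _ := h2
      _ = 6 * δ ^ 2 + 3 * (2 * variance Mb ℙ) := by rw [h3, h4]
      _ ≤ 6 * δ ^ 2 + 6 * w := by linarith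
  -- bound on Eᶜ via Cauchy–Schwarz
  have hEc_bound : (∫ ω in Eᶜ, f ω) ≤ Real.sqrt (2 * γ * K) := by
    have hpq : (2 : ℝ).HolderConjugate 2 := Real.HolderConjugate.two_two
    have hf2 : MemLp f (ENNReal.ofReal 2) ℙ := by
      rw [show ENNReal.ofReal 2 = 2 by norm_num]
      refine (memLp_two_iff_integrable_sq ?_).mpr ?_
      · exact (hMmem.aestronglyMeasurable.sub hM'mem.aestronglyMeasurable).pow 2
      · have h4 : (fun ω => f ω ^ 2) = fun ω => (M ω - M' ω) ^ 4 := by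
          funext ω; simp only [hf_def]; ring
        rw [h4]; exact hfourth
    have hg2 : MemLp (Eᶜ.indicator (1 : Ω → ℝ)) (ENNReal.ofReal 2) ℙ :=
      (memLp_const (1 : ℝ)).indicator hE.compl
    have hCS := integral_mul_le_Lp_mul_Lq_of_nonneg hpq
      (μ := ℙ) (f := f) (g := Eᶜ.indicator (1 : Ω → ℝ))
      (ae_of_all _ fun ω => sq_nonneg _)
      (ae_of_all _ fun ω => Set.indicator_nonneg (fun _ _ => zero_le_one) ω)
      hf2 hg2
    have hrpow2 : ∀ x : ℝ, x ^ (2:ℝ) = x ^ (2:ℕ) := fun x => by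
      rw [show (2:ℝ) = ((2:ℕ):ℝ) by norm_num, Real.rpow_natCast]
    simp only [hrpow2] at hCS
    have hfg : ∫ ω, f ω * Eᶜ.indicator (1 : Ω → ℝ) ω = ∫ ω in Eᶜ, f ω := by
      rw [← integral_indicator hE.compl]
      refine integral_congr_ae (ae_of_all _ fun ω => ?_)
      by_cases hω : ω ∈ Eᶜ <;> simp [hω]
    have hfsq : ∫ ω, f ω ^ (2:ℕ) = ∫ ω, (M ω - M' ω) ^ 4 := by
      refine integral_congr_ae (ae_of_all _ fun ω => ?_)
      simp only [hf_def]; ring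
    have hgsq : ∫ ω, (Eᶜ.indicator (1 : Ω → ℝ)) ω ^ (2:ℕ) = (ℙ Eᶜ).toReal := by
      rw [show (fun ω => (Eᶜ.indicator (1 : Ω → ℝ)) ω ^ (2:ℕ)) = Eᶜ.indicator (1 : Ω → ℝ)
        from funext fun ω => by by_cases hω : ω ∈ Eᶜ <;> simp [hω]]
      exact integral_indicator_one hE.compl
    rw [hfg, hfsq, hgsq] at hCS
    have hInn : (0:ℝ) ≤ ∫ ω, (M ω - M' ω) ^ 4 :=
      integral_nonneg fun ω => by positivity
    have hb1 : (∫ ω, (M ω - M' ω) ^ 4) ^ ((1:ℝ)/2) ≤ K ^ ((1:ℝ)/2) :=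
      Real.rpow_le_rpow hInn hKbd (by norm_num)
    have hb2 : ((ℙ Eᶜ).toReal) ^ ((1:ℝ)/2) ≤ γ ^ ((1:ℝ)/2) :=
      Real.rpow_le_rpow ENNReal.toReal_nonneg hEc (by norm_num)
    have hK2 : K ^ ((1:ℝ)/2) = Real.sqrt K := (Real.sqrt_eq_rpow K).symm
    have hγ2 : γ ^ ((1:ℝ)/2) = Real.sqrt γ := (Real.sqrt_eq_rpow γ).symm
    have hsq : Real.sqrt K * Real.sqrt γ ≤ Real.sqrt (2 * γ * K) := by
      rw [← Real.sqrt_mul hK]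
      exact Real.sqrt_le_sqrt (by nlinarith)
    calc (∫ ω in Eᶜ, f ω) ≤ _ := hCS
      _ ≤ K ^ ((1:ℝ)/2) * γ ^ ((1:ℝ)/2) :=
        mul_le_mul hb1 hb2 (Real.rpow_nonneg ENNReal.toReal_nonneg _)
          (Real.rpow_nonneg hK _)
      _ = Real.sqrt K * Real.sqrt γ := by rw [hK2, hγ2]
      _ ≤ Real.sqrt (2 * γ * K) := hsq
  have key : 2 * variance M ℙ ≤ 6 * δ ^ 2 + 6 * w + Real.sqrt (2 * γ * K) := by
    rw [← htot, hsplit]; linarith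
  linarith
end
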